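/- Let R be a finite commutative ring with q elements admitting a generating character χ, let n be a positive integer, and let u ∈ R^n have Hamming weight l. Then for every 0 ≤ p ≤ n, ∑_{v ∈ R^n, w(v) = p} χ(⟨u,v⟩) = ∑_{a=0}^{p} (−1)^a (q−1)^{p−a} · C(l, a) · C(n − l, p − a), where C(m,k) denotes the binomial coefficient (with C(m,k) = 0 for k > m). -/

import Mathlib

open scoped Classical


open Finset

section aux
variable {R : Type*} [CommRing R] [Fintype R] [DecidableEq R] (χ : AddChar R ℂ)

lemma myCharSum {ι : Type*} (s : Finset ι) (f : ι → R) :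
    χ (∑ k ∈ s, f k) = ∏ k ∈ s, χ (f k) := by
  induction s using Finset.cons_induction with
  | empty => simp
  | cons a s ha ih => rw [Finset.sum_cons, Finset.prod_cons, AddChar.map_add_eq_mul, ih]

lemma mySumZero (hχ : ∀ J : Ideal R, (∀ a ∈ J, χ a = 1) → J = ⊥)
    {c : R} (hc : c ≠ 0) : ∑ x : R, χ (c * x) = 0 := by
  have h1 : χ.mulShift c ≠ 1 := by
    intro h
    apply hc
    have hb : Ideal.span {c} = ⊥ := by
      apply hχ
      intro a ha
      rw [Ideal.mem_span_singleton] at ha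
      obtain ⟨x, rfl⟩ := ha
      have := DFunLike.ext_iff.mp h x
      simpa [mul_comm] using this
    rwa [Ideal.span_singleton_eq_bot] at hb
  simpa using AddChar.sum_eq_zero_of_ne_one h1

lemma myE (hχ : ∀ J : Ideal R, (∀ a ∈ J, χ a = 1) → J = ⊥) (c : R) :
    ∑ x ∈ Finset.univ.filter (fun x : R => x ≠ 0), χ (c * x)
      = if c = 0 then (Fintype.card R : ℂ) - 1 else -1 := by
  have hsplit : ∑ x : R, χ (c * x)
      = (∑ x ∈ Finset.univ.filter (fun x : R => x ≠ 0), χ (c * x)) + χ (c * 0) := by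
    rw [← Finset.sum_filter_add_sum_filter_not Finset.univ (fun x : R => x ≠ 0)]
    congr 1
    have : Finset.univ.filter (fun x : R => ¬ x ≠ 0) = {0} := by
      ext x; simp
    rw [this, Finset.sum_singleton]
  split_ifs with h
  · subst h
    have : ∀ x ∈ Finset.univ.filter (fun x : R => x ≠ 0), χ ((0:R) * x) = 1 := by
      intro x _; simp
    rw [Finset.sum_congr rfl this, Finset.sum_const, nsmul_eq_mul, mul_one]
    have hcard : (Finset.univ.filter (fun x : R => x ≠ 0)).card = Fintype.card R - 1 := by
      have : Finset.univ.filter (fun x : R => x ≠ 0) = Finset.univ \ {0} := by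
        ext x; simp
      rw [this, Finset.card_sdiff_of_subset (by simp), Finset.card_singleton, Finset.card_univ]
    rw [hcard, Nat.cast_sub Fintype.card_pos, Nat.cast_one]
  · have h0 := mySumZero χ hχ h
    rw [hsplit] at h0
    simp only [mul_zero, AddChar.map_zero_eq_one] at h0
    linear_combination h0

lemma mySupportSum (n : ℕ) (u : Fin n → R) (S : Finset (Fin n)) :
    ∑ v ∈ Finset.univ.filter
        (fun v : Fin n → R => Finset.univ.filter (fun k => v k ≠ 0) = S),
      χ (∑ k, u k * v k)
    = ∏ k ∈ S, ∑ x ∈ Finset.univ.filter (fun x : R => x ≠ 0), χ (u k * x) := by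
  rw [← Finset.prod_attach S (fun k => ∑ x ∈ Finset.univ.filter (fun x : R => x ≠ 0), χ (u k * x))]
  rw [show (S.attach.prod (fun k => ∑ x ∈ Finset.univ.filter (fun x : R => x ≠ 0), χ (u k.1 * x)))
      = ∏ k : {x // x ∈ S}, ∑ x ∈ Finset.univ.filter (fun x : R => x ≠ 0), χ (u k.1 * x) from rfl]
  rw [Finset.prod_univ_sum]
  refine Finset.sum_nbij' (fun v => fun k : {x // x ∈ S} => v k.1)
    (fun g => fun k => if h : k ∈ S then g ⟨k, h⟩ else 0) ?_ ?_ ?_ ?_ ?_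
  · intro v hv
    simp only [Finset.mem_filter, Finset.mem_univ, true_and] at hv
    simp only [Fintype.mem_piFinset, Finset.mem_filter, Finset.mem_univ, true_and]
    intro k
    have : (k : Fin n) ∈ Finset.univ.filter (fun k => v k ≠ 0) := hv ▸ k.2
    simpa using this
  · intro g hg
    simp only [Fintype.mem_piFinset, Finset.mem_filter, Finset.mem_univ, true_and] at hg
    simp only [Finset.mem_filter, Finset.mem_univ, true_and]
    ext k
    simp only [Finset.mem_filter, Finset.mem_univ, true_and]
    constructor
    · intro hk
      by_contra hkS
      simp [hkS] at hk
    · intro hk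
      simp only [hk, dif_pos]
      exact hg ⟨k, hk⟩
  · intro v hv
    simp only [Finset.mem_filter, Finset.mem_univ, true_and] at hv
    funext k
    by_cases hk : k ∈ S
    · simp [hk]
    · simp only [hk, dif_neg, not_false_iff]
      by_contra hvk
      have : k ∈ Finset.univ.filter (fun k => v k ≠ 0) := by simpa using Ne.symm hvk
      rw [hv] at this
      exact hk this
  · intro g hg
    funext k
    simp [k.2]
  · intro v hv
    simp only [Finset.mem_filter, Finset.mem_univ, true_and] at hv
    have h1 : ∑ k, u k * v k = ∑ k ∈ S, u k * v k := by
      rw [← hv]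
      refine (Finset.sum_filter_of_ne ?_).symm
      intro k _ hk
      intro h0
      exact hk (by rw [h0, mul_zero])
    rw [h1, myCharSum, ← Finset.prod_attach S (fun k => χ (u k * v k))]
    rfl

end aux

lemma myCount {α : Type*} [Fintype α] [DecidableEq α] (T : Finset α) (p a : ℕ) (ha : a ≤ p) :
    (((Finset.univ : Finset α).powersetCard p).filter
        (fun S => (S ∩ T).card = a)).card
      = T.card.choose a * Tᶜ.card.choose (p - a) := by
  rw [← Finset.card_powersetCard a T, ← Finset.card_powersetCard (p - a) Tᶜ,
    ← Finset.card_product]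
  refine Finset.card_nbij' (fun S => (S ∩ T, S \ T)) (fun P => P.1 ∪ P.2) ?_ ?_ ?_ ?_
  · intro S hS
    simp only [Finset.mem_coe, Finset.mem_filter, Finset.mem_powersetCard] at hS
    obtain ⟨⟨_, hcard⟩, hint⟩ := hS
    simp only [Finset.mem_coe, Finset.mem_product, Finset.mem_powersetCard]
    refine ⟨⟨Finset.inter_subset_right, hint⟩, ⟨?_, ?_⟩⟩
    · intro x hx
      simp only [Finset.mem_sdiff] at hx
      simpa using hx.2
    · have := Finset.card_inter_add_card_sdiff S T
      omega
  · intro P hP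
    simp only [Finset.mem_coe, Finset.mem_product, Finset.mem_powersetCard] at hP
    obtain ⟨⟨hA, hAc⟩, hB, hBc⟩ := hP
    have hdisj : Disjoint P.1 P.2 := by
      refine Finset.disjoint_left.mpr ?_
      intro x hx hx2
      have := hB hx2
      simp only [Finset.mem_compl] at this
      exact this (hA hx)
    simp only [Finset.mem_coe, Finset.mem_filter, Finset.mem_powersetCard]
    constructor
    · exact ⟨Finset.subset_univ _, by rw [Finset.card_union_of_disjoint hdisj, hAc, hBc]; omega⟩
    · have : (P.1 ∪ P.2) ∩ T = P.1 := by
        rw [Finset.union_inter_distrib_right, Finset.inter_eq_left.mpr hA]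
        have : P.2 ∩ T = ∅ := by
          refine Finset.eq_empty_of_forall_notMem ?_
          intro x hx
          simp only [Finset.mem_inter] at hx
          have := hB hx.1
          simp only [Finset.mem_compl] at this
          exact this hx.2
        rw [this, Finset.union_empty]
      rw [this, hAc]
  · intro S hS
    simp only
    exact sup_inf_sdiff S T
  · intro P hP
    simp only [Finset.mem_coe, Finset.mem_product, Finset.mem_powersetCard] at hP
    obtain ⟨⟨hA, hAc⟩, hB, hBc⟩ := hP
    have h1 : (P.1 ∪ P.2) ∩ T = P.1 := by
      rw [Finset.union_inter_distrib_right, Finset.inter_eq_left.mpr hA]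
      have h2 : P.2 ∩ T = ∅ := by
        refine Finset.eq_empty_of_forall_notMem ?_
        intro x hx
        simp only [Finset.mem_inter] at hx
        have := hB hx.1
        simp only [Finset.mem_compl] at this
        exact this hx.2
      rw [h2, Finset.union_empty]
    have h2 : (P.1 ∪ P.2) \ T = P.2 := by
      ext x
      simp only [Finset.mem_sdiff, Finset.mem_union]
      constructor
      · rintro ⟨h3 | h3, h4⟩
        · exact absurd (hA h3) h4
        · exact h3
      · intro h3
        have := hB h3
        simp only [Finset.mem_compl] at this
        exact ⟨Or.inr h3, this⟩
    simp only
    rw [h1, h2]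


/-- Key character sum: for a finite commutative ring `R` with `q` elements and a
generating character `χ`, and `u ∈ R^n` of Hamming weight `l`, for every `0 ≤ p ≤ n`,
`∑_{v ∈ R^n, w(v) = p} χ(⟨u,v⟩) = ∑_{a=0}^{p} (-1)^a (q-1)^{p-a} C(l,a) C(n-l,p-a)`. -/
theorem character_sum_over_fixed_hamming_weight
    {R : Type*} [CommRing R] [Fintype R] [DecidableEq R]
    (χ : AddChar R ℂ)
    (hχ : ∀ J : Ideal R, (∀ a ∈ J, χ a = 1) → J = ⊥)
    (n : ℕ) (hn : 0 < n) (u : Fin n → R) (l : ℕ) (hl : hammingNorm u = l)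
    (p : ℕ) (hp : p ≤ n) :
    ∑ v ∈ Finset.univ.filter (fun v : Fin n → R => hammingNorm v = p),
        χ (∑ k, u k * v k)
      = ∑ a ∈ Finset.range (p + 1),
          (-1 : ℂ) ^ a * ((Fintype.card R : ℂ) - 1) ^ (p - a) *
            (Nat.choose l a : ℂ) * (Nat.choose (n - l) (p - a) : ℂ) := by
  set T : Finset (Fin n) := Finset.univ.filter (fun k => u k ≠ 0) with hT
  have hNorm : ∀ v : Fin n → R, hammingNorm v
      = (Finset.univ.filter (fun k => v k ≠ 0)).card := by
    intro v
    rw [hammingNorm]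
  have hTl : T.card = l := by rw [hT, ← hNorm, hl]
  have hTc : Tᶜ.card = n - l := by
    rw [Finset.card_compl, hTl, Fintype.card_fin]
  -- Step 1: fiber the sum over supports
  rw [← Finset.sum_fiberwise_of_maps_to
    (g := fun v : Fin n → R => Finset.univ.filter (fun k => v k ≠ 0))
    (t := (Finset.univ : Finset (Fin n)).powersetCard p)
    (fun v hv => by
      simp only [Finset.mem_filter, Finset.mem_univ, true_and] at hv
      rw [Finset.mem_powersetCard]
      exact ⟨Finset.subset_univ _, by rw [← hNorm, hv]⟩)]
  -- Step 2: each support-fiber sum is the product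
  have step2 : ∀ S ∈ (Finset.univ : Finset (Fin n)).powersetCard p,
      ∑ v ∈ (Finset.univ.filter (fun v : Fin n → R => hammingNorm v = p)).filter
          (fun v => Finset.univ.filter (fun k => v k ≠ 0) = S),
        χ (∑ k, u k * v k)
      = ∏ k ∈ S, (if u k = 0 then (Fintype.card R : ℂ) - 1 else -1) := by
    intro S hS
    rw [Finset.mem_powersetCard] at hS
    have hfil : (Finset.univ.filter (fun v : Fin n → R => hammingNorm v = p)).filter
          (fun v => Finset.univ.filter (fun k => v k ≠ 0) = S)
        = Finset.univ.filter (fun v : Fin n → R =>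
            Finset.univ.filter (fun k => v k ≠ 0) = S) := by
      rw [Finset.filter_filter]
      apply Finset.filter_congr
      intro v _
      constructor
      · exact fun h => h.2
      · exact fun h => ⟨by rw [hNorm, h, hS.2], h⟩
    rw [hfil, mySupportSum χ n u S]
    exact Finset.prod_congr rfl (fun k _ => myE χ hχ (u k))
  rw [Finset.sum_congr rfl step2]
  -- Step 3: fiber over a = |S ∩ T|
  rw [← Finset.sum_fiberwise_of_maps_to
    (g := fun S : Finset (Fin n) => (S ∩ T).card)
    (t := Finset.range (p + 1))
    (fun S hS => by
      rw [Finset.mem_powersetCard] at hS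
      rw [Finset.mem_range, Nat.lt_succ_iff, ← hS.2]
      exact Finset.card_le_card Finset.inter_subset_left)]
  refine Finset.sum_congr rfl ?_
  intro a ha
  rw [Finset.mem_range, Nat.lt_succ_iff] at ha
  -- each term in the a-fiber is the same constant
  have hconst : ∀ S ∈ ((Finset.univ : Finset (Fin n)).powersetCard p).filter
      (fun S => (S ∩ T).card = a),
      ∏ k ∈ S, (if u k = 0 then (Fintype.card R : ℂ) - 1 else -1)
        = (-1 : ℂ) ^ a * ((Fintype.card R : ℂ) - 1) ^ (p - a) := by
    intro S hS
    simp only [Finset.mem_filter, Finset.mem_powersetCard] at hS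
    obtain ⟨⟨_, hcard⟩, hinta⟩ := hS
    have hsd : (S \ T).card = p - a := by
      have := Finset.card_inter_add_card_sdiff S T
      omega
    rw [← sup_inf_sdiff S T, Finset.sup_eq_union, Finset.inf_eq_inter]
    rw [Finset.prod_union (Finset.disjoint_left.mpr (fun x hx hx2 => by
      simp only [Finset.mem_inter, Finset.mem_sdiff] at hx hx2
      exact hx2.2 hx.2))]
    have h1 : ∏ k ∈ S ∩ T, (if u k = 0 then (Fintype.card R : ℂ) - 1 else -1)
        = (-1 : ℂ) ^ a := by
      rw [Finset.prod_congr rfl (fun k hk => by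
        rw [if_neg]
        simp only [Finset.mem_inter, hT, Finset.mem_filter] at hk
        exact hk.2.2), Finset.prod_const, hinta]
    have h2 : ∏ k ∈ S \ T, (if u k = 0 then (Fintype.card R : ℂ) - 1 else -1)
        = ((Fintype.card R : ℂ) - 1) ^ (p - a) := by
      rw [Finset.prod_congr rfl (fun k hk => by
        rw [if_pos]
        simp only [Finset.mem_sdiff, hT, Finset.mem_filter, Finset.mem_univ, true_and,
          not_not] at hk
        exact hk.2), Finset.prod_const, hsd]
    rw [h1, h2]
  rw [Finset.sum_congr rfl hconst, Finset.sum_const, myCount T p a ha, hTl, hTc,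
    nsmul_eq_mul]
  push_cast
  ring
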